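/- Let a red-blue edge-coloring of K_n be given. Let F be a largest family of pairwise vertex-disjoint triangles all of the same color (the maximum over both colors), and let F' be a largest family of pairwise vertex-disjoint bowties. Then 3|F| + 2|F'| ≥ n - 5. -/

import Mathlib

/-- `T` is a triangle of color `col` under the edge-coloring `c`. -/
def IsTri {V : Type*} [DecidableEq V] (c : V → V → Bool) (col : Bool) (T : Finset V) : Prop :=
  T.card = 3 ∧ ∀ x ∈ T, ∀ y ∈ T, x ≠ y → c x y = col

/-- `W` is a bowtie: the union of a red triangle and a blue triangle sharing exactly
one vertex. -/
def IsBowtie {V : Type*} [DecidableEq V] (c : V → V → Bool) (W : Finset V) : Prop :=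
  ∃ Tr Tb : Finset V, IsTri c true Tr ∧ IsTri c false Tb ∧ (Tr ∩ Tb).card = 1 ∧ W = Tr ∪ Tb

/-- A family of pairwise vertex-disjoint triangles, all of the same color `col`. -/
def TriFamily {V : Type*} [DecidableEq V] (c : V → V → Bool) (col : Bool)
    (F : Finset (Finset V)) : Prop :=
  (∀ T ∈ F, IsTri c col T) ∧ (F : Set (Finset V)).Pairwise Disjoint

/-- A family of pairwise vertex-disjoint bowties. -/
def BowtieFamily {V : Type*} [DecidableEq V] (c : V → V → Bool)
    (F : Finset (Finset V)) : Prop :=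
  (∀ W ∈ F, IsBowtie c W) ∧ (F : Set (Finset V)).Pairwise Disjoint

open Finset
lemma five_bool : ∀ g : Fin 5 → Bool, ∃ i j k : Fin 5, i ≠ j ∧ i ≠ k ∧ j ≠ k ∧ g i = g j ∧ g i = g k := by decide


set_option maxRecDepth 10000 in
lemma matrix33 : ∀ M : Fin 3 → Fin 3 → Bool,
    (∃ i j k, j ≠ k ∧ M i j = false ∧ M i k = false) ∨
    (∃ j i k, i ≠ k ∧ M i j = true ∧ M k j = true) := by decide

lemma vec3_inj {α : Type*} {x y z : α} (h1 : x ≠ y) (h2 : x ≠ z) (h3 : y ≠ z) :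
    ∀ i j : Fin 3, i ≠ j → ![x,y,z] i ≠ ![x,y,z] j := by
  intro i j hij
  intro h
  fin_cases i <;> fin_cases j <;>
    first | exact hij rfl | exact h1 h | exact h2 h | exact h3 h
          | exact h1 h.symm | exact h2 h.symm | exact h3 h.symm

lemma vec3_mem {α : Type*} [DecidableEq α] {x y z : α} {T : Finset α} (h : T = {x, y, z}) :
    ∀ i : Fin 3, ![x,y,z] i ∈ T := by
  intro i; fin_cases i <;> simp [h]


lemma isTri_triple {n : ℕ} {c : Fin n → Fin n → Bool} (hsym : ∀ x y, c x y = c y x) {col : Bool}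
    {x y z : Fin n} (hxy : x ≠ y) (hxz : x ≠ z) (hyz : y ≠ z)
    (e1 : c x y = col) (e2 : c x z = col) (e3 : c y z = col) :
    IsTri c col {x, y, z} := by
  constructor
  · rw [card_insert_of_notMem (by simp [hxy, hxz]), card_insert_of_notMem (by simp [hyz]),
      card_singleton]
  · intro a ha b hb hab
    simp only [mem_insert, mem_singleton] at ha hb
    rcases ha with rfl|rfl|rfl <;> rcases hb with rfl|rfl|rfl <;>
      first | exact absurd rfl hab | assumption | (rw [hsym]; assumption)


lemma ramsey33 {n : ℕ} {c : Fin n → Fin n → Bool} (hsym : ∀ x y, c x y = c y x)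
    {S : Finset (Fin n)} (hS : 6 ≤ S.card) :
    ∃ (col : Bool) (T : Finset (Fin n)), IsTri c col T ∧ T ⊆ S := by
  obtain ⟨s, hsS, hs6⟩ := Finset.exists_subset_card_eq hS
  set f := s.orderIsoOfFin hs6 with hf
  set a : Fin 6 → Fin n := fun i => (f i : Fin n) with ha
  have hmem : ∀ i, a i ∈ S := fun i => hsS (f i).2
  have hinj : Function.Injective a := fun i j h => f.injective (Subtype.ext h)
  obtain ⟨i, j, k, hij, hik, hjk, e1, e2⟩ := five_bool (fun i => c (a 0) (a i.succ))
  set col := c (a 0) (a i.succ) with hcol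
  set x := a i.succ with hx
  set y := a j.succ with hy
  set z := a k.succ with hz
  have h0x : a 0 ≠ x := fun h => (Fin.succ_ne_zero i) (hinj h).symm
  have h0y : a 0 ≠ y := fun h => (Fin.succ_ne_zero j) (hinj h).symm
  have h0z : a 0 ≠ z := fun h => (Fin.succ_ne_zero k) (hinj h).symm
  have hxy : x ≠ y := fun h => hij (Fin.succ_injective _ (hinj h))
  have hxz : x ≠ z := fun h => hik (Fin.succ_injective _ (hinj h))
  have hyz : y ≠ z := fun h => hjk (Fin.succ_injective _ (hinj h))
  by_cases exy : c x y = col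
  · exact ⟨col, _, isTri_triple hsym h0x h0y hxy rfl e1.symm exy,
      by intro v hv; simp only [mem_insert, mem_singleton] at hv
         rcases hv with rfl|rfl|rfl <;> exact hmem _⟩
  by_cases exz : c x z = col
  · exact ⟨col, _, isTri_triple hsym h0x h0z hxz rfl e2.symm exz,
      by intro v hv; simp only [mem_insert, mem_singleton] at hv
         rcases hv with rfl|rfl|rfl <;> exact hmem _⟩
  by_cases eyz : c y z = col
  · exact ⟨col, _, isTri_triple hsym h0y h0z hyz e1.symm e2.symm eyz,
      by intro v hv; simp only [mem_insert, mem_singleton] at hv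
         rcases hv with rfl|rfl|rfl <;> exact hmem _⟩
  · refine ⟨!col, _, isTri_triple hsym hxy hxz hyz ?_ ?_ ?_,
      by intro v hv; simp only [mem_insert, mem_singleton] at hv
         rcases hv with rfl|rfl|rfl <;> exact hmem _⟩
    · revert exy; cases c x y <;> cases col <;> simp
    · revert exz; cases c x z <;> cases col <;> simp
    · revert eyz; cases c y z <;> cases col <;> simp

lemma cross {n : ℕ} {c : Fin n → Fin n → Bool} (hsym : ∀ x y, c x y = c y x)
    {R Tr Tb : Finset (Fin n)} (hTr : IsTri c true Tr) (hTb : IsTri c false Tb)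
    (hTrR : Tr ⊆ R) (hTbR : Tb ⊆ R) : ∃ W, W ⊆ R ∧ IsBowtie c W := by
  rcases Nat.lt_trichotomy (Tr ∩ Tb).card 1 with hm | hm | hm
  · -- disjoint case
    have hdisj : Disjoint Tr Tb := by
      rw [Finset.disjoint_iff_inter_eq_empty, ← Finset.card_eq_zero]; omega
    obtain ⟨a, b, d, h1, h2, h3, hTreq⟩ := Finset.card_eq_three.mp hTr.1
    obtain ⟨x, y, z, g1, g2, g3, hTbeq⟩ := Finset.card_eq_three.mp hTb.1
    have hrmem := vec3_mem hTreq
    have hbmem := vec3_mem hTbeq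
    rcases matrix33 (fun i j => c (![a,b,d] i) (![x,y,z] j)) with ⟨i, j, k, hjk, e1, e2⟩ |
      ⟨j, i, k, hik, e1, e2⟩
    · -- blue triangle {v, p, q} with v ∈ Tr, p q ∈ Tb
      set v := ![a,b,d] i
      set p := ![x,y,z] j
      set q := ![x,y,z] k
      have hpq : p ≠ q := vec3_inj g1 g2 g3 j k hjk
      have hvp : v ≠ p := fun h => (Finset.disjoint_left.mp hdisj (hrmem i)) (by show v ∈ Tb; rw [h]; exact hbmem j)
      have hvq : v ≠ q := fun h => (Finset.disjoint_left.mp hdisj (hrmem i)) (by show v ∈ Tb; rw [h]; exact hbmem k)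
      have htri : IsTri c false {v, p, q} :=
        isTri_triple hsym hvp hvq hpq e1 e2 (hTb.2 p (hbmem j) q (hbmem k) hpq)
      have hint : Tr ∩ {v, p, q} = {v} := by
        ext w
        simp only [mem_inter, mem_insert, mem_singleton]
        constructor
        · rintro ⟨hw, rfl | rfl | rfl⟩
          · rfl
          · exact absurd hw (Finset.disjoint_right.mp hdisj (hbmem j))
          · exact absurd hw (Finset.disjoint_right.mp hdisj (hbmem k))
        · rintro rfl; exact ⟨hrmem i, Or.inl rfl⟩
      refine ⟨Tr ∪ {v, p, q}, Finset.union_subset hTrR ?_, Tr, {v,p,q}, hTr, htri, by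
        rw [hint]; exact card_singleton v, rfl⟩
      intro w hw
      simp only [mem_insert, mem_singleton] at hw
      rcases hw with rfl | rfl | rfl
      · exact hTrR (hrmem i)
      · exact hTbR (hbmem j)
      · exact hTbR (hbmem k)
    · -- red triangle {w, p, q} with w ∈ Tb, p q ∈ Tr
      set v := ![x,y,z] j
      set p := ![a,b,d] i
      set q := ![a,b,d] k
      have hpq : p ≠ q := vec3_inj h1 h2 h3 i k hik
      have hvp : v ≠ p := fun h => (Finset.disjoint_right.mp hdisj (hbmem j)) (by show v ∈ Tr; rw [h]; exact hrmem i)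
      have hvq : v ≠ q := fun h => (Finset.disjoint_right.mp hdisj (hbmem j)) (by show v ∈ Tr; rw [h]; exact hrmem k)
      have htri : IsTri c true {v, p, q} := by
        refine isTri_triple hsym hvp hvq hpq ?_ ?_ (hTr.2 p (hrmem i) q (hrmem k) hpq)
        · rw [hsym]; exact e1
        · rw [hsym]; exact e2
      have hint : {v, p, q} ∩ Tb = {v} := by
        ext w
        simp only [mem_inter, mem_insert, mem_singleton]
        constructor
        · rintro ⟨rfl | rfl | rfl, hw⟩
          · rfl
          · exact absurd hw (Finset.disjoint_left.mp hdisj (hrmem i))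
          · exact absurd hw (Finset.disjoint_left.mp hdisj (hrmem k))
        · rintro rfl; exact ⟨Or.inl rfl, hbmem j⟩
      refine ⟨{v, p, q} ∪ Tb, Finset.union_subset ?_ hTbR, {v,p,q}, Tb, htri, hTb, by
        rw [hint]; exact card_singleton v, rfl⟩
      intro w hw
      simp only [mem_insert, mem_singleton] at hw
      rcases hw with rfl | rfl | rfl
      · exact hTbR (hbmem j)
      · exact hTrR (hrmem i)
      · exact hTrR (hrmem k)
  · exact ⟨Tr ∪ Tb, Finset.union_subset hTrR hTbR, Tr, Tb, hTr, hTb, hm, rfl⟩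
  · obtain ⟨u, hu, w, hw, huw⟩ := Finset.one_lt_card.mp hm
    simp only [mem_inter] at hu hw
    have h1 := hTr.2 u hu.1 w hw.1 huw
    have h2 := hTb.2 u hu.2 w hw.2 huw
    rw [h1] at h2; exact absurd h2 (by simp)

lemma bowtie_card {V : Type*} [DecidableEq V] {c : V → V → Bool} {W : Finset V}
    (h : IsBowtie c W) : W.card = 5 := by
  obtain ⟨Tr, Tb, hr, hb, hi, rfl⟩ := h
  have h1 := hr.1
  have h2 := hb.1
  have h3 := Finset.card_union_add_card_inter Tr Tb
  omega


/-- If `F` is a largest monochromatic family of disjoint triangles (over both colors) and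
`F'` is a largest family of disjoint bowties, then `3|F| + 2|F'| ≥ n - 5`. -/
theorem stmt_1 (n : ℕ) (c : Fin n → Fin n → Bool) (hsym : ∀ x y, c x y = c y x)
    (col : Bool) (F F' : Finset (Finset (Fin n)))
    (hF : TriFamily c col F)
    (hFmax : ∀ (col' : Bool) (G : Finset (Finset (Fin n))), TriFamily c col' G → G.card ≤ F.card)
    (hF' : BowtieFamily c F')
    (hF'max : ∀ G : Finset (Finset (Fin n)), BowtieFamily c G → G.card ≤ F'.card) :
    (n : ℤ) - 5 ≤ 3 * F.card + 2 * F'.card := by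
  classical
  set A := F'.biUnion (fun W => W) with hA
  have hAcard : A.card = 5 * F'.card := by
    rw [hA, Finset.card_biUnion (fun x hx y hy hxy => hF'.2 hx hy hxy)]
    rw [Finset.sum_congr rfl (fun W hW => (bowtie_card (hF'.1 W hW) : W.card = 5))]
    rw [Finset.sum_const, smul_eq_mul, mul_comm]
  set R := Finset.univ \ A with hR
  have hRA : ∀ v ∈ R, v ∉ A := fun v hv => (Finset.mem_sdiff.mp hv).2
  have hAn : A.card ≤ n := by
    simpa using (Finset.card_le_univ A).trans_eq (by simp)
  have hRcard : R.card = n - A.card := by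
    rw [hR, Finset.card_sdiff_of_subset (Finset.subset_univ A)]; simp
  -- No bowtie inside R
  have hnoB : ∀ W, W ⊆ R → ¬ IsBowtie c W := by
    intro W hWR hW
    have hWnot : W ∉ F' := by
      intro hmem
      have hsub : W ⊆ A := Finset.subset_biUnion_of_mem (fun W => W) hmem
      obtain ⟨v, hv⟩ : W.Nonempty := Finset.card_pos.mp (by rw [bowtie_card hW]; norm_num)
      exact hRA v (hWR hv) (hsub hv)
    have hfam : BowtieFamily c (insert W F') := by
      constructor
      · intro X hX
        rcases Finset.mem_insert.mp hX with rfl | hX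
        · exact hW
        · exact hF'.1 X hX
      · rw [Finset.coe_insert, Set.pairwise_insert_of_symmetric]
        refine ⟨hF'.2, fun X hX _ => Finset.disjoint_left.mpr fun v hv hvX => ?_⟩
        exact hRA v (hWR hv) (Finset.mem_biUnion.mpr ⟨X, hX, hvX⟩)
    have := hF'max _ hfam
    rw [Finset.card_insert_of_notMem hWnot] at this
    omega
  -- All triangles inside R have a common color col₀
  obtain ⟨col₀, hcol₀⟩ : ∃ col₀ : Bool, ∀ (col' : Bool) (T : Finset (Fin n)),
      T ⊆ R → IsTri c col' T → col' = col₀ := by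
    by_cases hred : ∃ T, T ⊆ R ∧ IsTri c true T
    · obtain ⟨Tr, hTrR, hTrt⟩ := hred
      refine ⟨true, fun col' T hTR hT => ?_⟩
      cases col' with
      | true => rfl
      | false =>
        obtain ⟨W, hWR, hW⟩ := cross hsym hTrt hT hTrR hTR
        exact absurd hW (hnoB W hWR)
    · refine ⟨false, fun col' T hTR hT => ?_⟩
      cases col' with
      | false => rfl
      | true => exact absurd ⟨T, hTR, hT⟩ hred
  -- A maximum col₀-triangle family inside R
  have hPne : (Finset.univ.filter
      (fun G : Finset (Finset (Fin n)) => TriFamily c col₀ G ∧ ∀ T ∈ G, T ⊆ R)).Nonempty := by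
    refine ⟨∅, ?_⟩
    simp only [Finset.mem_filter, Finset.mem_univ, true_and]
    exact ⟨⟨by simp, by simp⟩, by simp⟩
  obtain ⟨G, hGmem, hGmax⟩ := Finset.exists_max_image _ Finset.card hPne
  simp only [Finset.mem_filter, Finset.mem_univ, true_and] at hGmem
  obtain ⟨hGfam, hGsubR⟩ := hGmem
  have hGbcard : (G.biUnion (fun T => T)).card = 3 * G.card := by
    rw [Finset.card_biUnion (fun x hx y hy hxy => hGfam.2 hx hy hxy)]
    rw [Finset.sum_congr rfl (fun T hT => ((hGfam.1 T hT).1 : T.card = 3))]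
    rw [Finset.sum_const, smul_eq_mul, mul_comm]
  set S := R \ G.biUnion (fun T => T) with hSdef
  have hScard : S.card ≤ 5 := by
    by_contra hcon
    push_neg at hcon
    obtain ⟨col', T, hT, hTS⟩ := ramsey33 hsym (show 6 ≤ S.card by omega)
    have hTR : T ⊆ R := hTS.trans Finset.sdiff_subset
    have hc := hcol₀ col' T hTR hT
    subst hc
    have hTnot : T ∉ G := by
      intro hmem
      obtain ⟨v, hv⟩ : T.Nonempty := Finset.card_pos.mp (by rw [hT.1]; norm_num)
      exact (Finset.mem_sdiff.mp (hTS hv)).2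
        (Finset.mem_biUnion.mpr ⟨T, hmem, hv⟩)
    have hTdisj : ∀ X ∈ G, Disjoint T X := by
      intro X hX
      refine Finset.disjoint_left.mpr fun v hv hvX => ?_
      exact (Finset.mem_sdiff.mp (hTS hv)).2 (Finset.mem_biUnion.mpr ⟨X, hX, hvX⟩)
    have hfam : TriFamily c col' (insert T G) := by
      constructor
      · intro X hX
        rcases Finset.mem_insert.mp hX with rfl | hX
        · exact hT
        · exact hGfam.1 X hX
      · rw [Finset.coe_insert, Set.pairwise_insert_of_symmetric]
        exact ⟨hGfam.2, fun X hX _ => hTdisj X hX⟩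
    have hmem2 : insert T G ∈ Finset.univ.filter
        (fun G : Finset (Finset (Fin n)) => TriFamily c col' G ∧ ∀ X ∈ G, X ⊆ R) := by
      simp only [Finset.mem_filter, Finset.mem_univ, true_and]
      refine ⟨hfam, fun X hX => ?_⟩
      rcases Finset.mem_insert.mp hX with rfl | hX
      · exact hTR
      · exact hGsubR X hX
    have := hGmax _ hmem2
    rw [Finset.card_insert_of_notMem hTnot] at this
    omega
  have hRS : R.card ≤ S.card + 3 * G.card := by
    rw [← hGbcard]
    refine le_trans (Finset.card_le_card ?_) (Finset.card_union_le _ _)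
    intro v hv
    by_cases hvb : v ∈ G.biUnion (fun T => T)
    · exact Finset.mem_union_right _ hvb
    · exact Finset.mem_union_left _ (Finset.mem_sdiff.mpr ⟨hv, hvb⟩)
  -- Choose a col₀-triangle inside each bowtie
  obtain ⟨φ, hφ⟩ := Classical.axiomOfChoice
    (show ∀ W : Finset (Fin n), ∃ T, W ∈ F' → IsTri c col₀ T ∧ T ⊆ W by
      intro W
      by_cases hW : W ∈ F'
      · obtain ⟨Tr, Tb, hr, hb, hi, hu⟩ := hF'.1 W hW
        cases col₀ with
        | true => exact ⟨Tr, fun _ => ⟨hr, hu ▸ Finset.subset_union_left⟩⟩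
        | false => exact ⟨Tb, fun _ => ⟨hb, hu ▸ Finset.subset_union_right⟩⟩
      · exact ⟨∅, fun h => absurd h hW⟩)
  have hφtri : ∀ W ∈ F', IsTri c col₀ (φ W) := fun W hW => (hφ W hW).1
  have hφsub : ∀ W ∈ F', φ W ⊆ W := fun W hW => (hφ W hW).2
  have hWsubA : ∀ W ∈ F', W ⊆ A := fun W hW => Finset.subset_biUnion_of_mem (fun W => W) hW
  have hGdisjA : ∀ T ∈ G, ∀ v ∈ T, v ∉ A := fun T hT v hv => hRA v (hGsubR T hT hv)
  have hTriH : TriFamily c col₀ (G ∪ F'.image φ) := by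
    constructor
    · intro X hX
      rcases Finset.mem_union.mp hX with hX | hX
      · exact hGfam.1 X hX
      · obtain ⟨W, hW, rfl⟩ := Finset.mem_image.mp hX
        exact hφtri W hW
    · intro X hX Y hY hXY
      simp only [Finset.coe_union, Set.mem_union, Finset.mem_coe, Finset.coe_image,
        Set.mem_image, Finset.mem_coe] at hX hY
      rcases hX with hX | ⟨W1, hW1, rfl⟩ <;> rcases hY with hY | ⟨W2, hW2, rfl⟩
      · exact hGfam.2 hX hY hXY
      · exact Finset.disjoint_left.mpr fun v hv hv2 =>
          hGdisjA X hX v hv (hWsubA W2 hW2 (hφsub W2 hW2 hv2))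
      · exact Finset.disjoint_right.mpr fun v hv hv2 =>
          hGdisjA Y hY v hv (hWsubA W1 hW1 (hφsub W1 hW1 hv2))
      · have hW12 : W1 ≠ W2 := fun h => hXY (h ▸ rfl)
        exact Finset.disjoint_of_subset_left (hφsub W1 hW1)
          (Finset.disjoint_of_subset_right (hφsub W2 hW2) (hF'.2 hW1 hW2 hW12))
  have hφinj : Set.InjOn φ F' := by
    intro W1 hW1 W2 hW2 heq
    by_contra hne
    have hdis : Disjoint W1 W2 := hF'.2 hW1 hW2 hne
    obtain ⟨v, hv⟩ : (φ W1).Nonempty := Finset.card_pos.mp (by rw [(hφtri W1 hW1).1]; norm_num)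
    exact Finset.disjoint_left.mp hdis (hφsub W1 hW1 hv) (hφsub W2 hW2 (heq ▸ hv))
  have hdisjGI : Disjoint G (F'.image φ) := by
    refine Finset.disjoint_left.mpr fun X hXG hXI => ?_
    obtain ⟨W, hW, rfl⟩ := Finset.mem_image.mp hXI
    obtain ⟨v, hv⟩ : (φ W).Nonempty := Finset.card_pos.mp (by rw [(hφtri W hW).1]; norm_num)
    exact hGdisjA _ hXG v hv (hWsubA W hW (hφsub W hW hv))
  have hHcard : (G ∪ F'.image φ).card = G.card + F'.card := by
    rw [Finset.card_union_of_disjoint hdisjGI, Finset.card_image_of_injOn hφinj]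
  have hkey : G.card + F'.card ≤ F.card := by
    rw [← hHcard]; exact hFmax col₀ _ hTriH
  omega
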